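/- The following identity holds in R_l: χ(l−1,0)·χ(1,2l−2) = Z + χ(l−2,0) + χ(l−2,2). (This is the character form of the relation expressing the coefficient λ as a polynomial in cluster variables, equation (34) of the paper, used to prove that the standard monomials span the generalised cluster algebra.) -/
import Mathlib


/-!
`Rl l` is the Laurent polynomial ring over `ℤ` in `l` commuting variables
`Y_0, Y_2, …, Y_{2l−2}`, with the index of `Y` read modulo `2l`.  It is realised
as the group algebra of the free abelian group `ZMod l →₀ ℤ`, the variable with
even index `n` corresponding to the residue `n/2` modulo `l`.
-/

/-- The Laurent polynomial ring `ℤ[Y_0^{±1}, Y_2^{±1}, …, Y_{2l−2}^{±1}]`,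
indices read modulo `2l`. -/
abbrev Rl (l : ℕ) : Type := AddMonoidAlgebra ℤ (ZMod l →₀ ℤ)

/-- The monomial `Y_n^e` (for `n` an even integer, read modulo `2l`). -/
noncomputable def Y (l : ℕ) (n e : ℤ) : Rl l :=
  AddMonoidAlgebra.single (Finsupp.single ((n / 2 : ℤ) : ZMod l) e) 1

/-- The `ε`-character `χ(k,a)` of the Kirillov–Reshetikhin module `W_ε(k,ε^a)`:
`χ(k,a) = Σ_{i=0}^{k} (Π_{t=0}^{k−1−i} Y_{a+2t}) · (Π_{t=k+1−i}^{k} Y_{a+2t}^{−1})`. -/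
noncomputable def chi (l : ℕ) (k : ℕ) (a : ℤ) : Rl l :=
  ∑ i ∈ Finset.range (k + 1),
    (∏ t ∈ Finset.range (k - i), Y l (a + 2 * (t : ℤ)) 1) *
      ∏ t ∈ Finset.Icc (k + 1 - i) k, Y l (a + 2 * (t : ℤ)) (-1)

/-- `Z = Y_0Y_2⋯Y_{2l−2} + (Y_0Y_2⋯Y_{2l−2})^{−1}`, the `ε`-character of the
Frobenius pullback `z₁ = L(𝐘₁)`. -/
noncomputable def Z (l : ℕ) : Rl l :=
  (∏ t ∈ Finset.range l, Y l (2 * (t : ℤ)) 1) +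
    ∏ t ∈ Finset.range l, Y l (2 * (t : ℤ)) (-1)

namespace LambdaAux

open Finset

noncomputable def m (l : ℕ) (f : ZMod l →₀ ℤ) : Rl l := AddMonoidAlgebra.single f 1

lemma m_zero (l : ℕ) : m l 0 = 1 := (AddMonoidAlgebra.one_def).symm

lemma m_mul (l : ℕ) (f g : ZMod l →₀ ℤ) : m l f * m l g = m l (f + g) := by
  simp [m, AddMonoidAlgebra.single_mul_single]

noncomputable def S (l : ℕ) (n : ℤ) : ZMod l →₀ ℤ :=
  Finsupp.single ((n / 2 : ℤ) : ZMod l) 1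

lemma Y_one (l : ℕ) (n : ℤ) : Y l n 1 = m l (S l n) := rfl

lemma Y_neg (l : ℕ) (n : ℤ) : Y l n (-1) = m l (-(S l n)) := by
  simp [Y, m, S, Finsupp.single_neg]

lemma prod_m (l : ℕ) (s : Finset ℕ) (f : ℕ → (ZMod l →₀ ℤ)) :
    ∏ t ∈ s, m l (f t) = m l (∑ t ∈ s, f t) := by
  induction s using Finset.cons_induction with
  | empty => simp [m_zero]
  | cons a s ha ih => rw [Finset.prod_cons, Finset.sum_cons, ih, m_mul]

lemma chi_eq (l k : ℕ) (a : ℤ) :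
    chi l k a = ∑ i ∈ range (k + 1),
      m l ((∑ t ∈ range (k - i), S l (a + 2 * (t : ℤ))) -
        ∑ t ∈ Icc (k + 1 - i) k, S l (a + 2 * (t : ℤ))) := by
  unfold chi
  refine Finset.sum_congr rfl fun i _ => ?_
  have h1 : ∏ t ∈ range (k - i), Y l (a + 2 * (t : ℤ)) 1
      = m l (∑ t ∈ range (k - i), S l (a + 2 * (t : ℤ))) := by
    simp_rw [Y_one]; rw [prod_m]
  have h2 : ∏ t ∈ Icc (k + 1 - i) k, Y l (a + 2 * (t : ℤ)) (-1)
      = m l (-∑ t ∈ Icc (k + 1 - i) k, S l (a + 2 * (t : ℤ))) := by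
    simp_rw [Y_neg]; rw [prod_m, Finset.sum_neg_distrib]
  rw [h1, h2, m_mul, sub_eq_add_neg]

lemma Z_eq (l : ℕ) :
    Z l = m l (∑ t ∈ range l, S l (2 * (t : ℤ)))
        + m l (-∑ t ∈ range l, S l (2 * (t : ℤ))) := by
  unfold Z
  congr 1
  · simp_rw [Y_one]; rw [prod_m]
  · simp_rw [Y_neg]; rw [prod_m, Finset.sum_neg_distrib]

lemma chi_one (l : ℕ) (a : ℤ) :
    chi l 1 a = m l (S l a) + m l (-(S l (a + 2))) := by
  rw [chi_eq]
  rw [Finset.sum_range_succ, Finset.sum_range_succ, Finset.sum_range_zero]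
  norm_num [Finset.Icc_self, Finset.sum_range_succ]


lemma key {G M : Type*} [AddCommMonoid G] [AddCommMonoid M] (φ : G → M)
    (u : ℕ → G) (v0 v1 : G) (w w' : ℕ → G) (z z' : G) (n : ℕ)
    (h1 : u 0 + v0 = z) (h2 : ∀ i < n + 1, u (i + 1) + v0 = w i)
    (h3 : ∀ i < n + 1, u i + v1 = w' i) (h4 : u (n + 1) + v1 = z') :
    (∑ i ∈ range (n + 1 + 1), φ (u i + v0)) + ∑ i ∈ range (n + 1 + 1), φ (u i + v1)
      = φ z + φ z' + ∑ i ∈ range (n + 1), φ (w i) + ∑ i ∈ range (n + 1), φ (w' i) := by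
  rw [Finset.sum_range_succ' (fun i => φ (u i + v0)) (n + 1),
      Finset.sum_range_succ (fun i => φ (u i + v1)) (n + 1)]
  simp only [h1, h4]
  have e2 : ∑ i ∈ range (n + 1), φ (u (i + 1) + v0) = ∑ i ∈ range (n + 1), φ (w i) :=
    Finset.sum_congr rfl fun i hi => congrArg φ (h2 i (Finset.mem_range.mp hi))
  have e3 : ∑ i ∈ range (n + 1), φ (u i + v1) = ∑ i ∈ range (n + 1), φ (w' i) :=
    Finset.sum_congr rfl fun i hi => congrArg φ (h3 i (Finset.mem_range.mp hi))
  rw [e2, e3]; abel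

lemma S_congr (l : ℕ) {a b : ℤ} (h : a = b) : S l a = S l b := by rw [h]

lemma S_top (n : ℕ) : S (n+2) (0 + 2 * ((n+1 : ℕ) : ℤ)) = S (n+2) (2 * ((n+2 : ℕ) : ℤ) - 2) :=
  S_congr _ (by push_cast; ring)

lemma S_lzero (n : ℕ) : S (n+2) (2 * ((n+2:ℕ):ℤ) - 2 + 2) = S (n+2) (0 + 2 * ((0:ℕ) : ℤ)) := by
  unfold S
  congr 1
  have h : (2 * ((n+2:ℕ):ℤ) - 2 + 2) / 2 = ((n+2:ℕ):ℤ) := by push_cast; omega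
  have h2 : ((0:ℤ) + 2 * ((0:ℕ):ℤ)) / 2 = 0 := by norm_num
  rw [h, h2]
  have h3 : ((n + 2 : ℕ) : ZMod (n + 2)) = 0 := ZMod.natCast_self _
  push_cast at h3 ⊢
  linear_combination h3

lemma exp1 (n : ℕ) :
    (∑ t ∈ Finset.range (n + 1 - 0), S (n + 2) (0 + 2 * (t:ℤ)) -
        ∑ t ∈ Finset.Icc (n + 1 + 1 - 0) (n + 1), S (n + 2) (0 + 2 * (t:ℤ)))
      + S (n + 2) (2 * ((n+2:ℕ):ℤ) - 2)
    = ∑ t ∈ Finset.range (n + 2), S (n + 2) (2 * (t:ℤ)) := by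
  have he : Finset.Icc (n + 1 + 1 - 0) (n + 1) = ∅ := Finset.Icc_eq_empty (by omega)
  rw [he, Finset.sum_empty, sub_zero, Nat.sub_zero]
  have hs : ∑ t ∈ Finset.range (n + 2), S (n + 2) (2 * (t:ℤ))
      = ∑ t ∈ Finset.range (n + 1), S (n + 2) (2 * (t:ℤ)) + S (n + 2) (2 * ((n+1:ℕ):ℤ)) :=
    Finset.sum_range_succ _ (n + 1)
  rw [hs, ← S_top n]
  congr 1
  · exact Finset.sum_congr rfl fun t _ => S_congr _ (by ring)
  · exact S_congr _ (by ring)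

lemma exp2 (n : ℕ) : ∀ i < n + 1,
    (∑ t ∈ Finset.range (n + 1 - (i+1)), S (n + 2) (0 + 2 * (t:ℤ)) -
        ∑ t ∈ Finset.Icc (n + 1 + 1 - (i+1)) (n + 1), S (n + 2) (0 + 2 * (t:ℤ)))
      + S (n + 2) (2 * ((n+2:ℕ):ℤ) - 2)
    = ∑ t ∈ Finset.range (n - i), S (n + 2) (0 + 2 * (t:ℤ)) -
        ∑ t ∈ Finset.Icc (n + 1 - i) n, S (n + 2) (0 + 2 * (t:ℤ)) := by
  intro i hi
  have e1 : n + 1 - (i + 1) = n - i := by omega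
  have e2 : n + 1 + 1 - (i + 1) = n + 1 - i := by omega
  rw [e1, e2]
  rw [Finset.sum_Icc_succ_top (by omega : n + 1 - i ≤ n + 1)]
  rw [← S_top n]
  abel

lemma exp3 (n : ℕ) : ∀ i < n + 1,
    (∑ t ∈ Finset.range (n + 1 - i), S (n + 2) (0 + 2 * (t:ℤ)) -
        ∑ t ∈ Finset.Icc (n + 1 + 1 - i) (n + 1), S (n + 2) (0 + 2 * (t:ℤ)))
      + -S (n + 2) (2 * ((n+2:ℕ):ℤ) - 2 + 2)
    = ∑ t ∈ Finset.range (n - i), S (n + 2) (2 + 2 * (t:ℤ)) -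
        ∑ t ∈ Finset.Icc (n + 1 - i) n, S (n + 2) (2 + 2 * (t:ℤ)) := by
  intro i hi
  have hA : ∑ t ∈ Finset.range (n + 1 - i), S (n + 2) (0 + 2 * (t:ℤ))
      = ∑ t ∈ Finset.range (n - i), S (n + 2) (2 + 2 * (t:ℤ)) + S (n + 2) (0 + 2 * ((0:ℕ):ℤ)) := by
    rw [show n + 1 - i = (n - i) + 1 by omega, Finset.sum_range_succ']
    congr 1
    exact Finset.sum_congr rfl fun t _ => S_congr _ (by push_cast; ring)
  have hB : ∑ t ∈ Finset.Icc (n + 1 + 1 - i) (n + 1), S (n + 2) (0 + 2 * (t:ℤ))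
      = ∑ t ∈ Finset.Icc (n + 1 - i) n, S (n + 2) (2 + 2 * (t:ℤ)) := by
    have hm : Finset.map (addRightEmbedding 1) (Finset.Icc (n + 1 - i) n)
        = Finset.Icc (n + 1 + 1 - i) (n + 1) := by
      rw [Finset.map_add_right_Icc]
      congr 1
      omega
    rw [← hm, Finset.sum_map]
    exact Finset.sum_congr rfl fun t _ => S_congr _ (by
      simp only [addRightEmbedding_apply]; push_cast; ring)
  rw [hA, hB, S_lzero]
  abel

lemma exp4 (n : ℕ) :
    (∑ t ∈ Finset.range (n + 1 - (n+1)), S (n + 2) (0 + 2 * (t:ℤ)) -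
        ∑ t ∈ Finset.Icc (n + 1 + 1 - (n+1)) (n + 1), S (n + 2) (0 + 2 * (t:ℤ)))
      + -S (n + 2) (2 * ((n+2:ℕ):ℤ) - 2 + 2)
    = -∑ t ∈ Finset.range (n + 2), S (n + 2) (2 * (t:ℤ)) := by
  have e1 : n + 1 - (n + 1) = 0 := by omega
  have e2 : n + 1 + 1 - (n + 1) = 1 := by omega
  rw [e1, e2, Finset.range_zero, Finset.sum_empty, zero_sub, S_lzero]
  have hs : ∑ t ∈ Finset.range (n + 2), S (n + 2) (2 * (t:ℤ))
      = ∑ t ∈ Finset.range (n + 1), S (n + 2) (2 * (((t + 1 : ℕ)):ℤ)) + S (n + 2) (2 * ((0:ℕ):ℤ)) :=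
    Finset.sum_range_succ' _ (n + 1)
  have hI : ∑ t ∈ Finset.Icc 1 (n + 1), S (n + 2) (0 + 2 * (t:ℤ))
      = ∑ t ∈ Finset.range (n + 1), S (n + 2) (2 * (((t + 1 : ℕ)):ℤ)) := by
    have hm : Finset.map (addRightEmbedding 1) (Finset.Icc 0 n) = Finset.Icc 1 (n + 1) := by
      rw [Finset.map_add_right_Icc]
    have hr : Finset.range (n + 1) = Finset.Icc 0 n := by
      rw [Finset.range_eq_Ico, Finset.Ico_add_one_right_eq_Icc]
    rw [← hm, Finset.sum_map, hr]
    exact Finset.sum_congr rfl fun t _ => S_congr _ (by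
      simp only [addRightEmbedding_apply]; push_cast; ring)
  rw [hs, hI]
  have h0 : S (n + 2) (0 + 2 * ((0:ℕ):ℤ)) = S (n + 2) (2 * ((0:ℕ):ℤ)) := S_congr _ (by ring)
  rw [h0]
  abel

end LambdaAux

open LambdaAux Finset

/-- Equation (34) of the paper, in character form:
`χ(l−1,0)·χ(1,2l−2) = Z + χ(l−2,0) + χ(l−2,2)`. -/
theorem lambda_relation (l : ℕ) (hl : 2 ≤ l) :
    chi l (l - 1) 0 * chi l 1 (2 * (l : ℤ) - 2) =
      Z l + chi l (l - 2) 0 + chi l (l - 2) 2 := by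
  obtain ⟨n, rfl⟩ : ∃ n, l = n + 2 := ⟨l - 2, by omega⟩
  have h1 : n + 2 - 1 = n + 1 := rfl
  have h2 : n + 2 - 2 = n := rfl
  rw [h1, h2, chi_one, chi_eq, chi_eq, chi_eq, Z_eq]
  rw [mul_add, Finset.sum_mul, Finset.sum_mul]
  simp_rw [m_mul]
  exact key (m (n+2))
    (fun x => ∑ t ∈ Finset.range (n + 1 - x), S (n + 2) (0 + 2 * (t:ℤ)) -
        ∑ t ∈ Finset.Icc (n + 1 + 1 - x) (n + 1), S (n + 2) (0 + 2 * (t:ℤ)))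
    (S (n + 2) (2 * ((n+2 : ℕ):ℤ) - 2)) (-S (n + 2) (2 * ((n+2:ℕ):ℤ) - 2 + 2))
    (fun i => ∑ t ∈ Finset.range (n - i), S (n + 2) (0 + 2 * (t:ℤ)) -
        ∑ t ∈ Finset.Icc (n + 1 - i) n, S (n + 2) (0 + 2 * (t:ℤ)))
    (fun i => ∑ t ∈ Finset.range (n - i), S (n + 2) (2 + 2 * (t:ℤ)) -
        ∑ t ∈ Finset.Icc (n + 1 - i) n, S (n + 2) (2 + 2 * (t:ℤ)))
    _ _ n (exp1 n) (exp2 n) (exp3 n) (exp4 n)
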